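/- Let L > n ≥ 1 be integers and fix a position k with 1 ≤ k ≤ L−1. Then, for the parameter values p = 1 and q = 0: ∑_{a : a_k = 1} w_{1,0}(a) = ∑_{j=0}^{L−n−1} C(L−1−k, j) · S(L−j−1, n), where the left-hand sum runs over all words a of length L−1 with entries in {0,1} having exactly n ones and a_k = 1, C(·,·) denotes the binomial coefficient, and S(m, r) is the Stirling number of the second kind. -/

import Mathlib

open Finset

/-- The stationary weight of a word `a` with entries in `{0,1}` (encoded as `Fin 2`):
the product over positions `i` with `a i = 0` of `1 + p·m_i(a) + q·n_i(a)`,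
where `m_i(a)` (resp. `n_i(a)`) is the number of `1`'s strictly before (resp. after) `i`. -/
noncomputable def wt (p q : ℝ) {m : ℕ} (a : Fin m → Fin 2) : ℝ :=
  ∏ i ∈ univ.filter (fun i => a i = 0),
    (1 + p * ((univ.filter (fun j => j < i ∧ a j = 1)).card : ℝ)
       + q * ((univ.filter (fun j => i < j ∧ a j = 1)).card : ℝ))

/-- The number of `1`'s in the word `a`. -/
def ones {m : ℕ} (a : Fin m → Fin 2) : ℕ := (univ.filter (fun i => a i = 1)).card

/-- The restricted partition function `R(L, n; p, q)`: the sum of the weights `wt p q a`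
over all words `a` of length `L - 1` with entries in `{0,1}` having exactly `n` ones. -/
noncomputable def R (L n : ℕ) (p q : ℝ) : ℝ :=
  ∑ a ∈ univ.filter (fun a : Fin (L - 1) → Fin 2 => ones a = n), wt p q a

/-- The Stirling number of the second kind `S(m, k)`: the number of partitions of an
`m`-element set into exactly `k` nonempty blocks. -/
noncomputable def stirling (m k : ℕ) : ℕ :=
  (univ.filter
    (fun P : Finpartition (univ : Finset (Fin m)) => P.parts.card = k)).card


variable {α β : Type*} [DecidableEq α] [DecidableEq β]

/-- number of partitions of `s` into `k` parts -/
noncomputable def npart (s : Finset α) (k : ℕ) : ℕ :=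
  (univ.filter (fun P : Finpartition s => P.parts.card = k)).card

/-- map a finpartition along an embedding -/
def Finpartition.embMap (f : α ↪ β) {s : Finset α} (P : Finpartition s) :
    Finpartition (s.map f) where
  parts := P.parts.image (Finset.map f)
  supIndep := by
    rw [Finset.supIndep_iff_pairwiseDisjoint]
    rintro x hx y hy hxy
    simp only [coe_image, Set.mem_image, mem_coe] at hx hy
    obtain ⟨t, ht, rfl⟩ := hx
    obtain ⟨u, hu, rfl⟩ := hy
    have htu : t ≠ u := by rintro rfl; exact hxy rfl
    simpa [Function.onFun, Finset.disjoint_map] using P.disjoint ht hu htu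
  sup_parts := by
    ext b
    simp only [sup_image, Finset.mem_sup, Function.comp, id_eq, Finset.mem_map]
    constructor
    · rintro ⟨t, ht, x, hx, rfl⟩
      exact ⟨x, P.le ht hx, rfl⟩
    · rintro ⟨x, hx, rfl⟩
      obtain ⟨t, ht, hxt⟩ := P.exists_mem hx
      exact ⟨t, ht, x, hxt, rfl⟩
  bot_notMem := by
    simp only [bot_eq_empty, mem_image]
    rintro ⟨t, ht, h⟩
    rw [Finset.map_eq_empty] at h
    subst h
    exact P.bot_notMem ht

/-- pull back a finpartition along an embedding -/
def Finpartition.embComap (f : α ↪ β) {s : Finset α} (Q : Finpartition (s.map f)) :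
    Finpartition s where
  parts := Q.parts.image (fun t => s.filter (fun x => f x ∈ t))
  supIndep := by
    rw [Finset.supIndep_iff_pairwiseDisjoint]
    rintro x hx y hy hxy
    simp only [coe_image, Set.mem_image, mem_coe] at hx hy
    obtain ⟨t, ht, rfl⟩ := hx
    obtain ⟨u, hu, rfl⟩ := hy
    have htu : t ≠ u := by rintro rfl; exact hxy rfl
    have hd := Q.disjoint ht hu htu
    simp only [Function.onFun, id_eq, Finset.disjoint_left, mem_filter]
    rintro z ⟨hzs, hzt⟩ ⟨-, hzu⟩
    exact (Finset.disjoint_left.1 hd) hzt hzu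
  sup_parts := by
    ext x
    simp only [sup_image, Finset.mem_sup, Function.comp, id_eq, mem_filter]
    constructor
    · rintro ⟨t, ht, hxs, -⟩; exact hxs
    · intro hx
      obtain ⟨t, ht, hxt⟩ := Q.exists_mem (Finset.mem_map_of_mem f hx)
      exact ⟨t, ht, hx, hxt⟩
  bot_notMem := by
    simp only [bot_eq_empty, mem_image]
    rintro ⟨t, ht, h⟩
    obtain ⟨b, hb⟩ := Q.nonempty_of_mem_parts ht
    obtain ⟨x, hxs, rfl⟩ := Finset.mem_map.1 (Q.le ht hb)
    have : x ∈ s.filter (fun x => f x ∈ t) := mem_filter.2 ⟨hxs, hb⟩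
    rw [h] at this
    exact notMem_empty _ this

lemma filter_map_eq {f : α ↪ β} {s : Finset α} {t : Finset β} (hts : t ⊆ s.map f) :
    (s.filter (fun x => f x ∈ t)).map f = t := by
  ext b
  simp only [Finset.mem_map, mem_filter]
  constructor
  · rintro ⟨x, ⟨-, hx⟩, rfl⟩; exact hx
  · intro hb
    obtain ⟨x, hxs, rfl⟩ := Finset.mem_map.1 (hts hb)
    exact ⟨x, ⟨hxs, hb⟩, rfl⟩

lemma embMap_comap (f : α ↪ β) {s : Finset α} (Q : Finpartition (s.map f)) :
    (Q.embComap f).embMap f = Q := by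
  ext1
  show ((Q.parts.image _).image _) = Q.parts
  rw [Finset.image_image]
  rw [Finset.image_congr (g := id), Finset.image_id]
  intro t ht
  exact filter_map_eq (Q.le (by simpa using ht))

lemma embComap_map (f : α ↪ β) {s : Finset α} (P : Finpartition s) :
    (P.embMap f).embComap f = P := by
  ext1
  show ((P.parts.image _).image _) = P.parts
  rw [Finset.image_image]
  rw [Finset.image_congr (g := id), Finset.image_id]
  intro t ht
  simp only [Function.comp, id_eq]
  ext x
  simp only [mem_filter, Finset.mem_map', ]
  exact ⟨fun h => h.2, fun h => ⟨P.le (by simpa using ht) h, h⟩⟩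

lemma card_embMap (f : α ↪ β) {s : Finset α} (P : Finpartition s) :
    (P.embMap f).parts.card = P.parts.card := by
  show (P.parts.image _).card = _
  apply Finset.card_image_of_injective
  exact Finset.map_injective f

lemma npart_map (f : α ↪ β) (s : Finset α) (k : ℕ) : npart (s.map f) k = npart s k := by
  unfold npart
  refine Finset.card_bij' (fun Q _ => Q.embComap f) (fun P _ => P.embMap f) ?_ ?_ ?_ ?_
  case refine_1 =>
    intro Q hQ
    simp only [mem_filter, mem_univ, true_and] at hQ ⊢
    rw [← hQ]
    conv_rhs => rw [← embMap_comap f Q]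
    rw [card_embMap]
  case refine_2 =>
    intro P hP
    simp only [mem_filter, mem_univ, true_and] at hP ⊢
    rw [card_embMap, hP]
  case refine_3 => intro Q _; exact embMap_comap f Q
  case refine_4 => intro P _; exact embComap_map f P

variable {a : α} {s : Finset α}


lemma insert_sdiff_singleton (ha : a ∉ s) : (insert a s) \ {a} = s := by
  ext x
  simp only [mem_sdiff, mem_insert, mem_singleton]
  constructor
  · rintro ⟨h | h, hx⟩
    · exact absurd h hx
    · exact h
  · intro h
    exact ⟨Or.inr h, fun hx => ha (hx ▸ h)⟩

/-- remove `a` from a finpartition of `insert a s` -/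
noncomputable def psi (ha : a ∉ s) (P : Finpartition (insert a s)) : Finpartition s :=
  (P.avoid {a}).copy (by rw [insert_sdiff_singleton ha])

lemma mem_psi_iff (ha : a ∉ s) (P : Finpartition (insert a s)) {c : Finset α} :
    c ∈ (psi ha P).parts ↔ ∃ d ∈ P.parts, ¬ d ⊆ {a} ∧ d.erase a = c := by
  unfold psi
  rw [Finpartition.copy_parts, Finpartition.mem_avoid]
  simp only [Finset.le_iff_subset, ← Finset.erase_eq]

/-- add `a` to part `t` (or as a singleton if `t = ∅`) of a finpartition of `s` -/
def insertIn (ha : a ∉ s) (Q : Finpartition s) (t : Finset α) (ht : t = ∅ ∨ t ∈ Q.parts) :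
    Finpartition (insert a s) where
  parts := insert (insert a t) (Q.parts.erase t)
  supIndep := by
    rw [Finset.supIndep_iff_pairwiseDisjoint, coe_insert]
    apply Set.PairwiseDisjoint.insert
    · exact Q.disjoint.subset (by simpa using fun u hu => (Finset.mem_of_mem_erase hu))
    · intro u hu hne
      simp only [mem_coe, Finset.mem_erase] at hu
      have hus : u ⊆ s := Q.le hu.2
      have hau : a ∉ u := fun h => ha (hus h)
      simp only [id_eq]
      rw [Finset.disjoint_insert_left]
      refine ⟨hau, ?_⟩
      rcases ht with rfl | ht
      · simp
      · exact Q.disjoint ht hu.2 (fun h => hu.1 h.symm)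
  sup_parts := by
    have hts : t ⊆ s := by
      rcases ht with rfl | ht
      · simp
      · exact Q.le ht
    ext x
    simp only [sup_insert, id_eq, Finset.mem_union, Finset.mem_sup, mem_insert,
      Finset.mem_erase, Finset.sup_eq_union]
    constructor
    · rintro ((h | h) | ⟨u, ⟨-, hu⟩, hxu⟩)
      · exact Or.inl h
      · exact Or.inr (hts h)
      · exact Or.inr (Q.le hu hxu)
    · rintro (h | h)
      · exact Or.inl (Or.inl h)
      · obtain ⟨u, hu, hxu⟩ := Q.exists_mem h
        by_cases hut : u = t
        · exact Or.inl (Or.inr (hut ▸ hxu))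
        · exact Or.inr ⟨u, ⟨hut, hu⟩, hxu⟩
  bot_notMem := by
    simp only [bot_eq_empty, mem_insert, Finset.mem_erase]
    rintro (h | ⟨-, h⟩)
    · exact absurd h.symm (Finset.insert_ne_empty a t)
    · exact Q.bot_notMem h

lemma insertIn_not_mem_erase (ha : a ∉ s) (Q : Finpartition s) (t : Finset α) :
    insert a t ∉ Q.parts.erase t := by
  intro h
  have := Q.le (Finset.mem_of_mem_erase h) (Finset.mem_insert_self a t)
  exact ha this

lemma insertIn_card_empty (ha : a ∉ s) (Q : Finpartition s) :
    (insertIn ha Q ∅ (Or.inl rfl)).parts.card = Q.parts.card + 1 := by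
  show (insert _ (Q.parts.erase ∅)).card = _
  rw [Finset.erase_eq_of_notMem (by simpa using Q.bot_notMem),
    Finset.card_insert_of_notMem]
  intro h
  exact ha (Q.le h (by simp))

lemma insertIn_card_mem (ha : a ∉ s) (Q : Finpartition s) (t : Finset α) (ht : t ∈ Q.parts) :
    (insertIn ha Q t (Or.inr ht)).parts.card = Q.parts.card := by
  show (insert _ (Q.parts.erase t)).card = _
  rw [Finset.card_insert_of_notMem (insertIn_not_mem_erase ha Q t),
    Finset.card_erase_of_mem ht]
  have : 1 ≤ Q.parts.card := Finset.card_pos.2 ⟨t, ht⟩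
  omega

lemma psi_insertIn (ha : a ∉ s) (Q : Finpartition s) (t : Finset α) (ht : t = ∅ ∨ t ∈ Q.parts) :
    psi ha (insertIn ha Q t ht) = Q := by
  ext1
  ext c
  rw [mem_psi_iff]
  constructor
  · rintro ⟨d, hd, hd2, rfl⟩
    rcases Finset.mem_insert.1 hd with rfl | hd
    · have hta : a ∉ t := by
        intro h
        rcases ht with rfl | ht
        · simp at h
        · exact ha (Q.le ht h)
      rw [Finset.erase_insert hta]
      rcases ht with rfl | ht
      · simp at hd2
      · exact ht
    · have hd' := Finset.mem_of_mem_erase hd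
      have had : a ∉ d := fun h => ha (Q.le hd' h)
      rw [Finset.erase_eq_of_notMem had]
      exact hd'
  · intro hc
    have hcne := Q.nonempty_of_mem_parts hc
    have hac : a ∉ c := fun h => ha (Q.le hc h)
    by_cases hct : c = t
    · subst hct
      refine ⟨insert a c, Finset.mem_insert_self _ _, ?_, Finset.erase_insert hac⟩
      intro hsub
      obtain ⟨x, hx⟩ := hcne
      have hxa := Finset.mem_singleton.1 (hsub (Finset.mem_insert_of_mem hx))
      subst hxa
      exact hac hx
    · refine ⟨c, Finset.mem_insert_of_mem (Finset.mem_erase.2 ⟨hct, hc⟩), ?_,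
        Finset.erase_eq_of_notMem hac⟩
      intro hsub
      obtain ⟨x, hx⟩ := hcne
      have hxa := Finset.mem_singleton.1 (hsub hx)
      subst hxa
      exact hac hx

lemma psi_parts_singleton (ha : a ∉ s) (P : Finpartition (insert a s)) (h : {a} ∈ P.parts) :
    (psi ha P).parts = P.parts.erase {a} := by
  ext c
  rw [mem_psi_iff, Finset.mem_erase]
  constructor
  · rintro ⟨d, hd, hd2, rfl⟩
    have hda : d ≠ {a} := by rintro rfl; exact hd2 (le_refl _)
    have had : a ∉ d := fun hmem =>
      hda (Finpartition.eq_of_mem_parts P hd h hmem (Finset.mem_singleton_self a))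
    rw [Finset.erase_eq_of_notMem had]
    exact ⟨hda, hd⟩
  · rintro ⟨hca, hc⟩
    have had : a ∉ c := fun hmem =>
      hca (Finpartition.eq_of_mem_parts P hc h hmem (Finset.mem_singleton_self a))
    refine ⟨c, hc, ?_, Finset.erase_eq_of_notMem had⟩
    intro hsub
    obtain ⟨x, hx⟩ := P.nonempty_of_mem_parts hc
    have hxa := Finset.mem_singleton.1 (hsub hx)
    subst hxa
    exact had hx

lemma psi_parts_not_singleton (ha : a ∉ s) (P : Finpartition (insert a s))
    (h : {a} ∉ P.parts) :
    (psi ha P).parts = insert ((P.part a).erase a) (P.parts.erase (P.part a)) := by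
  have hains : a ∈ insert a s := Finset.mem_insert_self a s
  have hpa : P.part a ∈ P.parts := P.part_mem.2 hains
  have hapa : a ∈ P.part a := P.mem_part hains
  ext c
  rw [mem_psi_iff, Finset.mem_insert, Finset.mem_erase]
  constructor
  · rintro ⟨d, hd, hd2, rfl⟩
    by_cases hdp : d = P.part a
    · subst hdp; exact Or.inl rfl
    · have had : a ∉ d := fun hmem =>
        hdp (Finpartition.eq_of_mem_parts P hd hpa hmem hapa)
      rw [Finset.erase_eq_of_notMem had]
      exact Or.inr ⟨hdp, hd⟩
  · rintro (rfl | ⟨hcp, hc⟩)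
    · refine ⟨P.part a, hpa, ?_, rfl⟩
      intro hsub
      apply h
      have heq : P.part a = {a} :=
        Finset.Subset.antisymm hsub (Finset.singleton_subset_iff.2 hapa)
      exact heq ▸ hpa
    · have had : a ∉ c := fun hmem =>
        hcp (Finpartition.eq_of_mem_parts P hc hpa hmem hapa)
      refine ⟨c, hc, ?_, Finset.erase_eq_of_notMem had⟩
      intro hsub
      obtain ⟨x, hx⟩ := P.nonempty_of_mem_parts hc
      have hxa := Finset.mem_singleton.1 (hsub hx)
      subst hxa
      exact had hx

lemma erase_part_not_mem (P : Finpartition (insert a s)) :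
    (P.part a).erase a ∉ P.parts.erase (P.part a) := by
  intro hmem
  have h1 := Finset.mem_of_mem_erase hmem
  have hne := (Finset.mem_erase.1 hmem).1
  obtain ⟨x, hx⟩ := P.nonempty_of_mem_parts h1
  have hx2 : x ∈ P.part a := Finset.mem_of_mem_erase hx
  exact hne (Finpartition.eq_of_mem_parts P h1 (P.part_mem.2 (Finset.mem_insert_self a s)) hx hx2)

lemma countA (ha : a ∉ s) (k : ℕ) :
    (univ.filter (fun P : Finpartition (insert a s) =>
      P.parts.card = k + 1 ∧ {a} ∈ P.parts)).card = npart s k := by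
  unfold npart
  refine Finset.card_bij' (fun P _ => psi ha P) (fun Q _ => insertIn ha Q ∅ (Or.inl rfl))
    ?_ ?_ ?_ ?_
  case refine_1 =>
    intro P hP
    simp only [mem_filter, mem_univ, true_and] at hP ⊢
    rw [psi_parts_singleton ha P hP.2, Finset.card_erase_of_mem hP.2, hP.1]
    omega
  case refine_2 =>
    intro Q hQ
    simp only [mem_filter, mem_univ, true_and] at hQ ⊢
    constructor
    · rw [insertIn_card_empty ha Q, hQ]
    · show {a} ∈ insert (insert a ∅) _
      simp
  case refine_3 =>
    intro P hP
    simp only [mem_filter, mem_univ, true_and] at hP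
    ext1
    show insert (insert a ∅) ((psi ha P).parts.erase ∅) = P.parts
    rw [psi_parts_singleton ha P hP.2]
    rw [Finset.erase_eq_of_notMem (a := (∅ : Finset α))
      (fun hmem => P.bot_notMem (Finset.mem_of_mem_erase hmem))]
    rw [show (insert a (∅ : Finset α)) = {a} from rfl]
    exact Finset.insert_erase hP.2
  case refine_4 =>
    intro Q _
    exact psi_insertIn ha Q ∅ (Or.inl rfl)

lemma countB (ha : a ∉ s) (k : ℕ) :
    (univ.filter (fun P : Finpartition (insert a s) =>
      P.parts.card = k + 1 ∧ {a} ∉ P.parts)).card = (k + 1) * npart s (k + 1) := by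
  have hcard : ((univ.filter (fun Q : Finpartition s => Q.parts.card = k + 1)).sigma
      (fun Q => Q.parts)).card = (k + 1) * npart s (k + 1) := by
    rw [Finset.card_sigma, Finset.sum_congr rfl (fun Q hQ => (Finset.mem_filter.1 hQ).2),
      Finset.sum_const, smul_eq_mul, npart, mul_comm]
  rw [← hcard]
  refine Finset.card_bij' (fun P _ => ⟨psi ha P, (P.part a).erase a⟩)
    (fun x hx => insertIn ha x.1 x.2 (Or.inr (Finset.mem_sigma.1 hx).2)) ?_ ?_ ?_ ?_
  case refine_1 =>
    intro P hP
    simp only [mem_filter, mem_univ, true_and] at hP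
    rw [Finset.mem_sigma]
    constructor
    · simp only [mem_filter, mem_univ, true_and]
      rw [psi_parts_not_singleton ha P hP.2,
        Finset.card_insert_of_notMem (erase_part_not_mem P),
        Finset.card_erase_of_mem (P.part_mem.2 (Finset.mem_insert_self a s)), hP.1]
      omega
    · rw [psi_parts_not_singleton ha P hP.2]
      exact Finset.mem_insert_self _ _
  case refine_2 =>
    intro x hx
    obtain ⟨hQ, ht⟩ := Finset.mem_sigma.1 hx
    simp only [mem_filter, mem_univ, true_and] at hQ ⊢
    constructor
    · rw [insertIn_card_mem ha x.1 x.2 ht, hQ]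
    · show {a} ∉ insert (insert a x.2) (x.1.parts.erase x.2)
      rw [Finset.mem_insert]
      rintro (h | h)
      · obtain ⟨y, hy⟩ := x.1.nonempty_of_mem_parts ht
        have : y ∈ ({a} : Finset α) := h ▸ Finset.mem_insert_of_mem hy
        rw [Finset.mem_singleton] at this
        exact ha (this ▸ x.1.le ht hy)
      · exact ha (x.1.le (Finset.mem_of_mem_erase h) (Finset.mem_singleton_self a))
  case refine_3 =>
    intro P hP
    simp only [mem_filter, mem_univ, true_and] at hP
    ext1
    show insert (insert a ((P.part a).erase a)) ((psi ha P).parts.erase ((P.part a).erase a))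
      = P.parts
    rw [Finset.insert_erase (P.mem_part (Finset.mem_insert_self a s)),
      psi_parts_not_singleton ha P hP.2,
      Finset.erase_insert (erase_part_not_mem P),
      Finset.insert_erase (P.part_mem.2 (Finset.mem_insert_self a s))]
  case refine_4 =>
    intro x hx
    obtain ⟨hQ, ht⟩ := Finset.mem_sigma.1 hx
    have h1 : psi ha (insertIn ha x.1 x.2 (Or.inr ht)) = x.1 :=
      psi_insertIn ha x.1 x.2 (Or.inr ht)
    have hta : a ∉ x.2 := fun h => ha (x.1.le ht h)
    have h2 : (insertIn ha x.1 x.2 (Or.inr ht)).part a = insert a x.2 := by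
      apply Finpartition.part_eq_of_mem
      · exact Finset.mem_insert_self _ _
      · exact Finset.mem_insert_self _ _
    have h3 : ((insertIn ha x.1 x.2 (Or.inr ht)).part a).erase a = x.2 := by
      rw [h2, Finset.erase_insert hta]
    obtain ⟨Q, t⟩ := x
    exact Sigma.ext h1 (heq_of_eq h3)

lemma npart_insert (ha : a ∉ s) (k : ℕ) :
    npart (insert a s) (k + 1) = npart s k + (k + 1) * npart s (k + 1) := by
  rw [← countA ha k, ← countB ha k]
  rw [npart]
  rw [← Finset.card_filter_add_card_filter_not
    (s := univ.filter (fun P : Finpartition (insert a s) => P.parts.card = k + 1))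
    (p := fun P => {a} ∈ P.parts)]
  rw [Finset.filter_filter, Finset.filter_filter]

noncomputable def stirlingAux (m k : ℕ) : ℕ :=
  (univ.filter
    (fun P : Finpartition (univ : Finset (Fin m)) => P.parts.card = k)).card

lemma stirlingAux_eq_npart (m k : ℕ) : stirlingAux m k = npart (univ : Finset (Fin m)) k := rfl

lemma univ_fin_succ_eq (m : ℕ) : (univ : Finset (Fin (m + 1)))
    = insert (Fin.last m) ((univ : Finset (Fin m)).map Fin.castSuccEmb) := by
  ext i
  simp only [mem_univ, true_iff, mem_insert, Finset.mem_map, Fin.castSuccEmb,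
    Function.Embedding.coeFn_mk]
  rcases Fin.eq_castSucc_or_eq_last i with ⟨j, rfl⟩ | rfl
  · exact Or.inr ⟨j, trivial, rfl⟩
  · exact Or.inl rfl

lemma last_not_mem_map (m : ℕ) :
    Fin.last m ∉ (univ : Finset (Fin m)).map Fin.castSuccEmb := by
  simp only [Finset.mem_map, mem_univ, true_and, not_exists]
  intro j h
  exact (Fin.castSucc_lt_last j).ne (by exact h)

lemma stirlingAux_rec (m n : ℕ) :
    stirlingAux (m + 1) (n + 1) = stirlingAux m n + (n + 1) * stirlingAux m (n + 1) := by
  rw [stirlingAux_eq_npart, stirlingAux_eq_npart, stirlingAux_eq_npart, univ_fin_succ_eq m,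
    npart_insert (last_not_mem_map m) n, npart_map, npart_map]

lemma stirlingAux_zero_zero : stirlingAux 0 0 = 1 := by
  unfold stirlingAux
  have hall : ∀ P : Finpartition (univ : Finset (Fin 0)), P.parts = ∅ := by
    intro P
    rw [Finpartition.parts_eq_empty_iff]
    rfl
  rw [Finset.filter_true_of_mem (fun P _ => by rw [hall P]; rfl)]
  rw [Finset.card_univ]
  refine Fintype.card_eq_one_iff.2 ⟨⊥, fun P => ?_⟩
  ext1
  rw [hall P, hall ⊥]

lemma stirlingAux_zero_succ (k : ℕ) : stirlingAux 0 (k + 1) = 0 := by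
  unfold stirlingAux
  rw [Finset.card_eq_zero, Finset.filter_eq_empty_iff]
  intro P _
  have : P.parts = ∅ := by rw [Finpartition.parts_eq_empty_iff]; rfl
  simp [this]

lemma stirlingAux_succ_zero (m : ℕ) : stirlingAux (m + 1) 0 = 0 := by
  unfold stirlingAux
  rw [Finset.card_eq_zero, Finset.filter_eq_empty_iff]
  intro P _
  rw [Finset.card_eq_zero, Finpartition.parts_eq_empty_iff]
  intro h
  have : (0 : Fin (m + 1)) ∈ (univ : Finset (Fin (m + 1))) := mem_univ _
  rw [h] at this
  exact notMem_empty _ this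

lemma stirlingAux_eq_zero_of_lt {m k : ℕ} (h : m < k) : stirlingAux m k = 0 := by
  unfold stirlingAux
  rw [Finset.card_eq_zero, Finset.filter_eq_empty_iff]
  intro P _
  have h1 := P.card_parts_le_card
  rw [Finset.card_univ, Fintype.card_fin] at h1
  omega
def cnt {m : ℕ} (a : Fin m → Fin 2) (i : Fin m) : ℕ :=
  (univ.filter (fun j => j < i ∧ a j = 1)).card

lemma wt10 {m : ℕ} (a : Fin m → Fin 2) :
    wt 1 0 a = ∏ i ∈ univ.filter (fun i => a i = 0), (1 + (cnt a i : ℝ)) := by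
  unfold wt cnt
  simp [one_mul, zero_mul, add_zero]

lemma ones_snoc {m : ℕ} (b : Fin m → Fin 2) (c : Fin 2) :
    ones (Fin.snoc b c) = ones b + (if c = 1 then 1 else 0) := by
  unfold ones
  rw [Finset.card_filter, Finset.card_filter, Fin.sum_univ_castSucc]
  simp [Fin.snoc_castSucc, Fin.snoc_last]

lemma cnt_snoc_castSucc {m : ℕ} (b : Fin m → Fin 2) (c : Fin 2) (i : Fin m) :
    cnt (Fin.snoc b c) i.castSucc = cnt b i := by
  unfold cnt
  rw [Finset.card_filter, Finset.card_filter, Fin.sum_univ_castSucc]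
  simp [Fin.snoc_castSucc, Fin.castSucc_lt_castSucc_iff, (Fin.castSucc_lt_last i).asymm]

lemma cnt_snoc_last {m : ℕ} (b : Fin m → Fin 2) (c : Fin 2) :
    cnt (Fin.snoc b c) (Fin.last m) = ones b := by
  unfold cnt ones
  rw [Finset.card_filter, Finset.card_filter, Fin.sum_univ_castSucc]
  simp [Fin.snoc_castSucc, Fin.castSucc_lt_last, lt_irrefl]

lemma wt_snoc {m : ℕ} (b : Fin m → Fin 2) (c : Fin 2) :
    wt 1 0 (Fin.snoc b c) = (if c = 0 then (1 + (ones b : ℝ)) else 1) * wt 1 0 b := by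
  rw [wt10, wt10, Finset.prod_filter, Finset.prod_filter, Fin.prod_univ_castSucc]
  simp only [Fin.snoc_castSucc, Fin.snoc_last, cnt_snoc_castSucc, cnt_snoc_last]
  rw [mul_comm]

lemma sum_snoc {m : ℕ} (F : (Fin (m + 1) → Fin 2) → ℝ) :
    ∑ a : Fin (m + 1) → Fin 2, F a
    = ∑ b : Fin m → Fin 2, (F (Fin.snoc b 0) + F (Fin.snoc b 1)) := by
  rw [← Equiv.sum_comp (Fin.snocEquiv (fun _ => Fin 2)) F]
  rw [Fintype.sum_prod_type]
  rw [Finset.sum_comm]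
  apply Finset.sum_congr rfl
  intro b _
  rw [Fin.sum_univ_two]
  rfl

noncomputable def W (m n : ℕ) : ℝ :=
  ∑ a ∈ univ.filter (fun a : Fin m → Fin 2 => ones a = n), wt 1 0 a

noncomputable def Wk (m n : ℕ) (i : Fin m) : ℝ :=
  ∑ a ∈ univ.filter (fun a : Fin m → Fin 2 => ones a = n ∧ a i = 1), wt 1 0 a

lemma W_zero_zero : W 0 0 = 1 := by
  unfold W
  rw [Finset.sum_filter]
  rw [Fintype.sum_eq_single (fun _ => 0)]
  · simp [ones, wt]
  · intro b hb
    exact absurd (funext fun i => absurd i.2 (by omega)) hb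

lemma W_zero_succ (n : ℕ) : W 0 (n + 1) = 0 := by
  unfold W ones
  apply Finset.sum_eq_zero
  intro a ha
  simp only [mem_filter, mem_univ, true_and] at ha
  have : (univ.filter (fun i : Fin 0 => a i = 1)) = ∅ := by
    apply Finset.eq_empty_of_forall_notMem
    intro i
    exact absurd i.2 (by omega)
  rw [this] at ha
  simp at ha

lemma W_succ (m n : ℕ) :
    W (m + 1) (n + 1) = W m n + ((n : ℝ) + 2) * W m (n + 1) := by
  unfold W
  rw [Finset.sum_filter, Finset.sum_filter, Finset.sum_filter, sum_snoc, Finset.mul_sum,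
    ← Finset.sum_add_distrib]
  apply Finset.sum_congr rfl
  intro b _
  rw [wt_snoc, wt_snoc, ones_snoc, ones_snoc]
  norm_num
  by_cases h : ones b = n + 1 <;> by_cases h' : ones b = n <;> simp [h, h'] <;>
    first
      | omega
      | (left; push_cast; ring)

lemma stirlingAux_eq (m k : ℕ) : stirling m k = stirlingAux m k := rfl

lemma Wk_zero {m : ℕ} (i : Fin m) : Wk m 0 i = 0 := by
  unfold Wk
  apply Finset.sum_eq_zero
  intro a ha
  simp only [mem_filter, mem_univ, true_and] at ha
  exfalso
  have hi : i ∈ univ.filter (fun j => a j = 1) := by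
    simp [ha.2]
  have := ha.1
  unfold ones at this
  rw [Finset.card_eq_zero] at this
  rw [this] at hi
  exact notMem_empty _ hi

lemma Wk_last (m n : ℕ) : Wk (m + 1) (n + 1) (Fin.last m) = W m n := by
  unfold Wk W
  rw [Finset.sum_filter, Finset.sum_filter, sum_snoc]
  apply Finset.sum_congr rfl
  intro b _
  rw [wt_snoc, wt_snoc, ones_snoc, ones_snoc]
  simp only [Fin.snoc_last]
  norm_num

lemma Wk_castSucc (m n : ℕ) (i : Fin m) :
    Wk (m + 1) (n + 1) i.castSucc = Wk m n i + ((n : ℝ) + 2) * Wk m (n + 1) i := by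
  unfold Wk
  rw [Finset.sum_filter, Finset.sum_filter, Finset.sum_filter, sum_snoc, Finset.mul_sum,
    ← Finset.sum_add_distrib]
  apply Finset.sum_congr rfl
  intro b _
  rw [wt_snoc, wt_snoc, ones_snoc, ones_snoc]
  simp only [Fin.snoc_castSucc]
  norm_num
  by_cases hb : b i = 1
  · simp only [hb]
    norm_num
    by_cases h : ones b = n + 1 <;> by_cases h' : ones b = n <;> simp [h, h'] <;>
      first
        | omega
        | (left; push_cast; ring)
  · simp [hb]

lemma W_succ_zero (m : ℕ) : W (m + 1) 0 = W m 0 := by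
  unfold W
  rw [Finset.sum_filter, Finset.sum_filter, sum_snoc]
  apply Finset.sum_congr rfl
  intro b _
  rw [wt_snoc, wt_snoc, ones_snoc, ones_snoc]
  norm_num
  by_cases h : ones b = 0 <;> simp [h]

lemma W_eq_stirling (m : ℕ) : ∀ n : ℕ, W m n = (stirlingAux (m + 1) (n + 1) : ℝ) := by
  induction m with
  | zero =>
    intro n
    cases n with
    | zero =>
      rw [W_zero_zero, stirlingAux_rec 0 0, stirlingAux_zero_zero, stirlingAux_zero_succ]
      norm_num
    | succ n =>
      rw [W_zero_succ, stirlingAux_eq_zero_of_lt (by omega)]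
      norm_num
  | succ m ih =>
    intro n
    cases n with
    | zero =>
      rw [W_succ_zero, ih 0, stirlingAux_rec (m + 1) 0, stirlingAux_succ_zero]
      norm_num
    | succ n =>
      rw [W_succ, ih n, ih (n + 1), stirlingAux_rec (m + 1) (n + 1)]
      push_cast
      ring

lemma pascal_sum (c r : ℕ) (X : ℕ → ℝ) :
    ∑ j ∈ Finset.range (r + 1), ((c + 1).choose j : ℝ) * X j
    = ∑ j ∈ Finset.range (r + 1), (c.choose j : ℝ) * X j
      + ∑ j ∈ Finset.range r, (c.choose j : ℝ) * X (j + 1) := by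
  rw [Finset.sum_range_succ' (fun j => ((c + 1).choose j : ℝ) * X j) r]
  rw [Finset.sum_range_succ' (fun j => (c.choose j : ℝ) * X j) r]
  have hp : ∀ j : ℕ, (((c + 1).choose (j + 1) : ℕ) : ℝ)
      = (c.choose j : ℝ) + (c.choose (j + 1) : ℝ) := by
    intro j
    rw [Nat.choose_succ_succ]
    push_cast
    ring
  simp only [hp, Nat.choose_zero_right, Nat.cast_one, add_mul]
  rw [Finset.sum_add_distrib]
  ring

theorem key : ∀ (m n k : ℕ), 1 ≤ k → k ≤ m → ∀ (h : k - 1 < m),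
    Wk m n ⟨k - 1, h⟩
    = ∑ j ∈ Finset.range (m + 1 - n), ((m - k).choose j : ℝ) * (stirlingAux (m - j) n : ℝ) := by
  intro m
  induction m with
  | zero => intro n k hk1 hkm; omega
  | succ m ih =>
    intro n k hk1 hkm h
    by_cases hkm1 : k = m + 1
    · -- k = m+1 : the index is the last position
      subst hkm1
      have hidx : (⟨m + 1 - 1, h⟩ : Fin (m + 1)) = Fin.last m := rfl
      rw [hidx]
      have hck : m + 1 - (m + 1) = 0 := by omega
      rw [hck]
      cases n with
      | zero =>
        rw [Wk_zero]
        symm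
        apply Finset.sum_eq_zero
        intro j hj
        rcases Nat.eq_zero_or_pos j with rfl | hj0
        · have : m + 1 - 0 = m + 1 := by omega
          rw [this, stirlingAux_succ_zero]
          norm_num
        · rw [Nat.choose_eq_zero_of_lt hj0]
          norm_num
      | succ n =>
        rw [Wk_last, W_eq_stirling]
        by_cases hn : n + 1 ≤ m + 1
        · rw [Finset.sum_eq_single_of_mem 0 (by rw [Finset.mem_range]; omega)]
          · norm_num
          · intro j _ hj0
            rw [Nat.choose_eq_zero_of_lt (by omega)]
            norm_num
        · have h1 : m + 1 + 1 - (n + 1) = 0 := by omega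
          rw [h1, stirlingAux_eq_zero_of_lt (by omega)]
          norm_num
    · -- k ≤ m
      have hkm' : k ≤ m := by omega
      have h' : k - 1 < m := by omega
      have hidx : (⟨k - 1, h⟩ : Fin (m + 1)) = Fin.castSucc ⟨k - 1, h'⟩ := rfl
      rw [hidx]
      have hc : m + 1 - k = (m - k) + 1 := by omega
      cases n with
      | zero =>
        rw [Wk_zero]
        symm
        apply Finset.sum_eq_zero
        intro j hj
        rw [Finset.mem_range] at hj
        by_cases hjm : j ≤ m
        · have : m + 1 - j = (m - j) + 1 := by omega
          rw [this, stirlingAux_succ_zero]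
          norm_num
        · have hj' : j = m + 1 := by omega
          subst hj'
          rw [Nat.choose_eq_zero_of_lt (by omega)]
          norm_num
      | succ n =>
        rw [Wk_castSucc, ih n k hk1 hkm' h', ih (n + 1) k hk1 hkm' h']
        by_cases hnm : n ≤ m
        · have hr1 : m + 1 - n = (m - n) + 1 := by omega
          have hr2 : m + 1 + 1 - (n + 1) = (m - n) + 1 := by omega
          have hr3 : m + 1 - (n + 1) = m - n := by omega
          set r := m - n with hr
          rw [hr1, hr2, hr3, hc]
          rw [pascal_sum (m - k) r (fun j => (stirlingAux (m + 1 - j) (n + 1) : ℝ))]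
          have hstep : ∀ j ∈ Finset.range (r + 1),
              ((m - k).choose j : ℝ) * (stirlingAux (m + 1 - j) (n + 1) : ℝ)
              = ((m - k).choose j : ℝ) * (stirlingAux (m - j) n : ℝ)
                + ((n : ℝ) + 1) * (((m - k).choose j : ℝ) * (stirlingAux (m - j) (n + 1) : ℝ)) := by
            intro j hj
            rw [Finset.mem_range] at hj
            have hmj : m + 1 - j = (m - j) + 1 := by omega
            rw [hmj, stirlingAux_rec (m - j) n]
            push_cast
            ring
          rw [Finset.sum_congr rfl hstep, Finset.sum_add_distrib, ← Finset.mul_sum]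
          have hsplit : ∑ j ∈ Finset.range (r + 1),
              ((m - k).choose j : ℝ) * (stirlingAux (m - j) (n + 1) : ℝ)
              = ∑ j ∈ Finset.range r,
                  ((m - k).choose j : ℝ) * (stirlingAux (m - j) (n + 1) : ℝ) := by
            rw [Finset.sum_range_succ]
            have : m - r = n := by omega
            rw [this, stirlingAux_eq_zero_of_lt (by omega)]
            norm_num
          have hshift : ∀ j ∈ Finset.range r,
              ((m - k).choose j : ℝ) * (stirlingAux (m + 1 - (j + 1)) (n + 1) : ℝ)
              = ((m - k).choose j : ℝ) * (stirlingAux (m - j) (n + 1) : ℝ) := by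
            intro j hj
            have : m + 1 - (j + 1) = m - j := by omega
            rw [this]
          rw [Finset.sum_congr rfl hshift, hsplit]
          ring
        · -- degenerate: n > m, all ranges empty
          have hr1 : m + 1 - n = 0 := by omega
          have hr2 : m + 1 + 1 - (n + 1) = 0 := by omega
          have hr3 : m + 1 - (n + 1) = 0 := by omega
          rw [hr1, hr2, hr3]
          simp
/-- at `p = 1`, `q = 0`, the weighted sum over configurations with an
ordinary particle at word position `k` (index `k - 1`) in terms of Stirling numbers. -/
theorem density_front_p1_q0 (L n k : ℕ) (hn1 : 1 ≤ n) (hnL : n < L) (hk1 : 1 ≤ k)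
    (hk2 : k ≤ L - 1) :
    (∑ a ∈ univ.filter (fun a : Fin (L - 1) → Fin 2 =>
        ones a = n ∧ a ⟨k - 1, by omega⟩ = 1), wt 1 0 a)
    = ∑ j ∈ Finset.range (L - n),
        (Nat.choose (L - 1 - k) j : ℝ) * (stirling (L - j - 1) n : ℝ) := by
  have hL : 1 ≤ L - 1 := by omega
  have hkey := key (L - 1) n k hk1 hk2 (by omega)
  have hlhs : (∑ a ∈ univ.filter (fun a : Fin (L - 1) → Fin 2 =>
        ones a = n ∧ a ⟨k - 1, by omega⟩ = 1), wt 1 0 a)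
      = Wk (L - 1) n ⟨k - 1, by omega⟩ := rfl
  rw [hlhs, hkey]
  have hrange : L - 1 + 1 - n = L - n := by omega
  rw [hrange]
  apply Finset.sum_congr rfl
  intro j hj
  have h1 : L - 1 - k = L - 1 - k := rfl
  have h2 : L - 1 - j = L - j - 1 := by omega
  rw [stirlingAux_eq, h2]
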